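/- A finitely separable rayless graph has no infinite bond. -/

import Mathlib

namespace SimpleGraph

variable {V : Type*} (G : SimpleGraph V)

/-- The cut of `G` with side `X`: all edges with one end in `X` and the other
outside `X`. -/
def cutEdgeSet (X : Set V) : Set (Sym2 V) :=
  {e : Sym2 V | ∃ a b : V, G.Adj a b ∧ e = s(a, b) ∧ a ∈ X ∧ b ∉ X}

/-- `G` is finitely separable: any two distinct vertices are separated by a
finite cut. -/
def FinitelySeparable : Prop :=
  ∀ v w : V, v ≠ w → ∃ X : Set V, v ∈ X ∧ w ∉ X ∧ (G.cutEdgeSet X).Finite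

/-- The subgraph of `G` induced on `S` is connected. -/
def ConnectedOn (S : Set V) : Prop :=
  ∀ u ∈ S, ∀ v ∈ S,
    Relation.ReflTransGen (fun a b => a ∈ S ∧ b ∈ S ∧ G.Adj a b) u v

/-- `S` induces a 2-block of `G`: a maximal connected subgraph without a
cutvertex. -/
def IsTwoBlock (S : Set V) : Prop :=
  G.ConnectedOn S ∧ (∀ x ∈ S, G.ConnectedOn (S \ {x})) ∧
    ∀ T : Set V, S ⊆ T → G.ConnectedOn T →
      (∀ x ∈ T, G.ConnectedOn (T \ {x})) → T = S

/-- `G` contains no ray (one-way infinite path). -/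
def Rayless : Prop :=
  ¬ ∃ f : ℕ → V, Function.Injective f ∧ ∀ n : ℕ, G.Adj (f n) (f (n + 1))

end SimpleGraph

namespace SimpleGraph

variable {V : Type*} (G : SimpleGraph V)

/-- `B` is a cut of `G`. -/
def IsCut (B : Set (Sym2 V)) : Prop :=
  ∃ X : Set V, B = G.cutEdgeSet X

/-- `B` is a bond of `G`: a minimal non-empty cut. -/
def IsBond (B : Set (Sym2 V)) : Prop :=
  G.IsCut B ∧ B.Nonempty ∧
    ∀ B' : Set (Sym2 V), G.IsCut B' → B'.Nonempty → B' ⊆ B → B' = B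

end SimpleGraph

namespace BondAux

open SimpleGraph

variable {V : Type*} {G : SimpleGraph V}

/-- The relation of adjacency within a set `S`. -/
def relOn (G : SimpleGraph V) (S : Set V) : V → V → Prop :=
  fun a b => a ∈ S ∧ b ∈ S ∧ G.Adj a b

lemma relOn_symm {S : Set V} : Symmetric (relOn G S) :=
  fun _ _ h => ⟨h.2.1, h.1, h.2.2.symm⟩

lemma reach_symm {S : Set V} {u v : V}
    (h : Relation.ReflTransGen (relOn G S) u v) :
    Relation.ReflTransGen (relOn G S) v u :=
  by haveI : Std.Symm (relOn G S) := ⟨fun _ _ h' => relOn_symm h'⟩; exact Std.Symm.symm _ _ h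

/-- All ends of edges of a walk whose support lies in `S` lie in `S`. -/
lemma edge_ends_mem {u v : V} {p : G.Walk u v} {S : Set V}
    (hs : ∀ x ∈ p.support, x ∈ S) {e : Sym2 V} (he : e ∈ p.edges) :
    ∀ w ∈ e, w ∈ S := by
  induction e using Sym2.ind with
  | _ a b =>
    intro w hw
    rw [Sym2.mem_iff] at hw
    rcases hw with rfl | rfl
    · exact hs _ (p.fst_mem_support_of_mem_edges he)
    · exact hs _ (p.snd_mem_support_of_mem_edges he)

/-- From reflexive-transitive reachability within `T` from `r` to `x ≠ r`, we get a
walk whose vertices are either `r` or lie in `T \ {r}` and are connected to `x`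
within `T \ {r}`. -/
lemma exists_walk_split {T : Set V} {r x : V}
    (h : Relation.ReflTransGen (relOn G T) r x) (hx : x ≠ r) :
    ∃ W : G.Walk r x, ∀ v ∈ W.support, v = r ∨ (v ∈ T ∧ v ≠ r ∧
      Relation.ReflTransGen (relOn G (T \ {r})) v x) := by
  induction h with
  | refl => exact absurd rfl hx
  | @tail b c hrb hbc ih =>
    by_cases hb : b = r
    · subst hb
      refine ⟨Walk.cons hbc.2.2 Walk.nil, ?_⟩
      intro v hv
      simp only [SimpleGraph.Walk.support_cons, SimpleGraph.Walk.support_nil,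
        List.mem_cons] at hv
      rcases hv with rfl | hv
      · exact Or.inl rfl
      · simp only [List.not_mem_nil, or_false] at hv
        subst hv
        exact Or.inr ⟨hbc.2.1, hx, Relation.ReflTransGen.refl⟩
    · obtain ⟨W, hW⟩ := ih hb
      refine ⟨W.concat hbc.2.2, ?_⟩
      intro v hv
      rw [SimpleGraph.Walk.support_concat, List.mem_append,
        List.mem_singleton] at hv
      rcases hv with hv | rfl
      · rcases hW v hv with hr | ⟨h1, h2, h3⟩
        · exact Or.inl hr
        · refine Or.inr ⟨h1, h2, h3.tail ?_⟩
          exact ⟨⟨hbc.1, hb⟩, ⟨hbc.2.1, hx⟩, hbc.2.2⟩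
      · exact Or.inr ⟨hbc.2.1, hx, Relation.ReflTransGen.refl⟩

/-- The reachability class of `c` within `T` induces a connected set. -/
lemma connectedOn_class {T : Set V} {c : V} (hc : c ∈ T) :
    G.ConnectedOn {x ∈ T | Relation.ReflTransGen (relOn G T) c x} := by
  set K := {x ∈ T | Relation.ReflTransGen (relOn G T) c x} with hK
  have key : ∀ x, Relation.ReflTransGen (relOn G T) c x →
      Relation.ReflTransGen (relOn G K) c x := by
    intro x hx
    induction hx with
    | refl => exact Relation.ReflTransGen.refl
    | @tail b d hcb hbd ih =>
      exact (ih).tail ⟨⟨hbd.1, hcb⟩, ⟨hbd.2.1, hcb.tail hbd⟩, hbd.2.2⟩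
  intro u hu v hv
  have h1 : Relation.ReflTransGen (relOn G K) c u := key u hu.2
  have h2 : Relation.ReflTransGen (relOn G K) c v := key v hv.2
  exact Relation.ReflTransGen.trans (reach_symm h1) h2

end BondAux
namespace BondAux

open SimpleGraph

variable {V : Type*} {G : SimpleGraph V}

lemma cutEdgeSet_compl (X : Set V) : G.cutEdgeSet Xᶜ = G.cutEdgeSet X := by
  ext e
  constructor
  · rintro ⟨a, b, hadj, rfl, ha, hb⟩
    exact ⟨b, a, hadj.symm, Sym2.eq_swap, by simpa using hb, by simpa using ha⟩
  · rintro ⟨a, b, hadj, rfl, ha, hb⟩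
    exact ⟨b, a, hadj.symm, Sym2.eq_swap, by simpa using hb, by simpa using ha⟩

/-- If `B` is a bond with side `X`, then all endpoints of `B` in `X` lie in one
reachability class of `X`, which is a connected set. -/
lemma bond_side {B : Set (Sym2 V)} (hbond : G.IsBond B) {X : Set V}
    (hBX : B = G.cutEdgeSet X) :
    ∃ C : Set V, C ⊆ X ∧ G.ConnectedOn C ∧
      ∀ e ∈ B, ∃ p q, G.Adj p q ∧ e = s(p, q) ∧ p ∈ C ∧ q ∉ X := by
  obtain ⟨e₀, he₀⟩ := hbond.2.1
  obtain ⟨x₀, b₀, hadj₀, he₀eq, hx₀, hb₀⟩ := hBX ▸ he₀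
  refine ⟨{x ∈ X | Relation.ReflTransGen (relOn G X) x₀ x}, fun x hx => hx.1,
    connectedOn_class hx₀, ?_⟩
  set C := {x ∈ X | Relation.ReflTransGen (relOn G X) x₀ x} with hC
  -- no edge from C to X \ C
  have hkey : ∀ a b, G.Adj a b → a ∈ C → b ∉ C → b ∉ X := by
    intro a b hadj ha hb hbX
    exact hb ⟨hbX, ha.2.tail ⟨ha.1, hbX, hadj⟩⟩
  have hsub : G.cutEdgeSet C ⊆ B := by
    rintro e ⟨a, b, hadj, rfl, ha, hb⟩
    rw [hBX]
    exact ⟨a, b, hadj, rfl, ha.1, hkey a b hadj ha hb⟩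
  have hne : (G.cutEdgeSet C).Nonempty := by
    refine ⟨e₀, x₀, b₀, hadj₀, he₀eq, ⟨hx₀, Relation.ReflTransGen.refl⟩, ?_⟩
    exact fun h => hb₀ h.1
  have heq : G.cutEdgeSet C = B := hbond.2.2 _ ⟨C, rfl⟩ hne hsub
  intro e he
  rw [← heq] at he
  obtain ⟨p, q, hadj, rfl, hp, hq⟩ := he
  exact ⟨p, q, hadj, rfl, hp, hkey p q hadj hp hq⟩

end BondAux
namespace BondAux

open SimpleGraph

variable {V : Type*} {G : SimpleGraph V}

/-- There is a vertex `z` of `S` with infinitely many pairwise edge-disjoint walks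
inside `S` to terms of the sequence `a`. -/
def HasStar (G : SimpleGraph V) (S : Set V) (a : ℕ → V) : Prop :=
  ∃ z ∈ S, ∃ g : ℕ → ℕ, Function.Injective g ∧
    ∃ P : (n : ℕ) → G.Walk z (a (g n)),
      (∀ n, ∀ x ∈ (P n).support, x ∈ S) ∧
      ∀ m n, m ≠ n → ∀ e ∈ (P m).edges, e ∉ (P n).edges

/-- State for the ray-building recursion. -/
structure AuxState (G : SimpleGraph V) (S : Set V) (a : ℕ → V) where
  T : Set V
  hTS : T ⊆ S
  hconn : G.ConnectedOn T
  r : V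
  hr : r ∈ T
  I : Set ℕ
  hI : I.Infinite
  haT : ∀ n ∈ I, a n ∈ T

lemma step_lemma {S : Set V} {a : ℕ → V} (hno : ¬ HasStar G S a)
    (s : AuxState G S a) :
    ∃ t : AuxState G S a, t.T ⊆ s.T \ {s.r} ∧ G.Adj s.r t.r := by
  obtain ⟨T, hTS, hconn, r, hr, I, hI, haT⟩ := s
  simp only
  classical
  set J := {n ∈ I | a n ≠ r} with hJdef
  -- Step 0: infinitely many indices with `a n ≠ r`, else trivial star at `r`.
  have hJ : J.Infinite := by
    by_contra hJf
    rw [Set.not_infinite] at hJf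
    have hF : {n ∈ I | a n = r}.Infinite := by
      intro hFf
      refine hI ((hJf.union hFf).subset fun n hn => ?_)
      by_cases h : a n = r
      · exact Or.inr ⟨hn, h⟩
      · exact Or.inl ⟨hn, h⟩
    set emb := Set.Infinite.natEmbedding _ hF with hembdef
    refine hno ⟨r, hTS hr, fun n => (emb n : ℕ),
      fun m n hmn => emb.injective (Subtype.ext hmn),
      fun n => (Walk.nil : G.Walk r r).copy rfl ((emb n).2.2.symm),
      ?_, ?_⟩
    · intro n x hx
      simp only [Walk.support_copy, Walk.support_nil, List.mem_singleton] at hx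
      subst hx
      exact hTS hr
    · intro m n _ e he
      simp [Walk.edges_copy, Walk.edges_nil] at he
  by_cases hfib : ∃ n ∈ J,
      {m ∈ J | Relation.ReflTransGen (relOn G (T \ {r})) (a m) (a n)}.Infinite
  · -- some reachability class of `T \ {r}` carries infinitely many indices
    obtain ⟨n₀, hn₀J, hinf'⟩ := hfib
    have han₀ : a n₀ ∈ T \ {r} := ⟨haT n₀ hn₀J.1, by simpa using hn₀J.2⟩
    -- a neighbour of `r` in the class of `a n₀`
    obtain ⟨W, hW⟩ := exists_walk_split (G := G)
      (hconn r hr (a n₀) (haT n₀ hn₀J.1)) hn₀J.2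
    have hWnil : ¬ W.Nil := Walk.not_nil_of_ne (Ne.symm hn₀J.2)
    obtain ⟨u, hadjru, q, hWeq⟩ := Walk.not_nil_iff.mp hWnil
    have huW : u ∈ W.support := by
      rw [hWeq]
      simp only [Walk.support_cons, List.mem_cons]
      exact Or.inr (Walk.start_mem_support q)
    have hu : u ∈ T ∧ u ≠ r ∧
        Relation.ReflTransGen (relOn G (T \ {r})) u (a n₀) :=
      (hW u huW).resolve_left hadjru.ne'
    refine ⟨⟨{x ∈ T \ {r} | Relation.ReflTransGen (relOn G (T \ {r})) (a n₀) x},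
      fun x hx => hTS hx.1.1, connectedOn_class han₀, u,
      ⟨⟨hu.1, by simpa using hu.2.1⟩, reach_symm hu.2.2⟩,
      {m ∈ J | Relation.ReflTransGen (relOn G (T \ {r})) (a m) (a n₀)}, hinf',
      ?_⟩, fun x hx => hx.1, hadjru⟩
    intro m hm
    exact ⟨⟨haT m hm.1.1, by simpa using hm.1.2⟩, reach_symm hm.2⟩
  · -- all classes finite: build an infinite antichain, hence a star at `r`
    push_neg at hfib
    exfalso
    set pick : List ℕ → ℕ := fun l =>
      sInf {m | m ∈ J ∧ ∀ k ∈ l,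
        ¬ Relation.ReflTransGen (relOn G (T \ {r})) (a m) (a k)} with hpickdef
    have hpick : ∀ l : List ℕ, (∀ k ∈ l, k ∈ J) →
        pick l ∈ J ∧ ∀ k ∈ l,
          ¬ Relation.ReflTransGen (relOn G (T \ {r})) (a (pick l)) (a k) := by
      intro l hl
      have hUfin : (⋃ k ∈ {k | k ∈ l},
          {m ∈ J | Relation.ReflTransGen (relOn G (T \ {r})) (a m) (a k)}).Finite :=
        Set.Finite.biUnion l.finite_toSet fun k hk => hfib k (hl k hk)
      have hne : {m | m ∈ J ∧ ∀ k ∈ l,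
          ¬ Relation.ReflTransGen (relOn G (T \ {r})) (a m) (a k)}.Nonempty := by
        refine Set.Nonempty.mono ?_ (hJ.diff hUfin).nonempty
        intro m hm
        refine ⟨hm.1, fun k hk hc => hm.2 ?_⟩
        exact Set.mem_biUnion hk ⟨hm.1, hc⟩
      exact Nat.sInf_mem hne
    set L : ℕ → List ℕ := fun n => Nat.rec [] (fun _ l => pick l :: l) n with hLdef
    have hLsucc : ∀ n, L (n + 1) = pick (L n) :: L n := fun n => rfl
    have hLJ : ∀ n, ∀ k ∈ L n, k ∈ J := by
      intro n
      induction n with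
      | zero => intro k hk; simp [hLdef] at hk
      | succ n ih =>
        intro k hk
        rw [hLsucc, List.mem_cons] at hk
        rcases hk with rfl | hk
        · exact (hpick (L n) ih).1
        · exact ih k hk
    set h : ℕ → ℕ := fun n => pick (L n) with hhdef
    have hhJ : ∀ n, h n ∈ J := fun n => (hpick (L n) (hLJ n)).1
    have hmemL : ∀ m n, m < n → h m ∈ L n := by
      intro m n hmn
      induction n with
      | zero => omega
      | succ n ih =>
        rw [hLsucc, List.mem_cons]
        rcases Nat.lt_succ_iff_lt_or_eq.mp hmn with hlt | rfl
        · exact Or.inr (ih hlt)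
        · exact Or.inl rfl
    have hanti : ∀ m n, m < n →
        ¬ Relation.ReflTransGen (relOn G (T \ {r})) (a (h n)) (a (h m)) :=
      fun m n hmn => (hpick (L n) (hLJ n)).2 (h m) (hmemL m n hmn)
    have hanti' : ∀ m n, m ≠ n →
        ¬ Relation.ReflTransGen (relOn G (T \ {r})) (a (h m)) (a (h n)) := by
      intro m n hmn hc
      rcases lt_or_gt_of_ne hmn with hlt | hlt
      · exact hanti m n hlt (reach_symm hc)
      · exact hanti n m hlt hc
    have hinj : Function.Injective h := by
      intro m n hmn
      by_contra hne
      exact hanti' m n hne (hmn ▸ Relation.ReflTransGen.refl)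
    choose W hW using fun n => exists_walk_split (G := G)
      (hconn r hr (a (h n)) (haT _ (hhJ n).1)) (hhJ n).2
    refine hno ⟨r, hTS hr, h, hinj, W, ?_, ?_⟩
    · intro n x hx
      rcases hW n x hx with rfl | ⟨h1, _, _⟩
      · exact hTS hr
      · exact hTS h1
    · intro m n hmn e hem hen
      induction e using Sym2.ind with
      | _ p q =>
        have hadj : G.Adj p q := (Walk.edges_subset_edgeSet _ hem)
        have hpm : p ∈ (W m).support := Walk.fst_mem_support_of_mem_edges _ hem
        have hpn : p ∈ (W n).support := Walk.fst_mem_support_of_mem_edges _ hen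
        have hqm : q ∈ (W m).support := Walk.snd_mem_support_of_mem_edges _ hem
        have hqn : q ∈ (W n).support := Walk.snd_mem_support_of_mem_edges _ hen
        -- a non-`r` endpoint of the edge
        obtain ⟨w, hwm, hwn, hwr⟩ : ∃ w, w ∈ (W m).support ∧ w ∈ (W n).support ∧
            w ≠ r := by
          by_cases hp : p = r
          · exact ⟨q, hqm, hqn, fun hq => hadj.ne (hp.trans hq.symm)⟩
          · exact ⟨p, hpm, hpn, hp⟩
        have hm' := (hW m w hwm).resolve_left hwr
        have hn' := (hW n w hwn).resolve_left hwr
        exact hanti' m n hmn ((reach_symm hm'.2.2).trans hn'.2.2)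

lemma core (hray : G.Rayless) {S : Set V} (hS : G.ConnectedOn S) (a : ℕ → V)
    (ha : ∀ n, a n ∈ S) : HasStar G S a := by
  by_contra hno
  choose nxt hsub hadj using step_lemma hno
  set f : ℕ → AuxState G S a :=
    fun n => nxt^[n] ⟨S, subset_rfl, hS, a 0, ha 0, Set.univ, Set.infinite_univ,
      fun n _ => ha n⟩ with hfdef
  have hf : ∀ n, f (n + 1) = nxt (f n) := fun n =>
    Function.iterate_succ_apply' nxt n _
  have hmono : ∀ m n, m < n → (f n).T ⊆ (f m).T \ {(f m).r} := by
    intro m n hmn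
    induction n with
    | zero => omega
    | succ n ih =>
      rcases Nat.lt_succ_iff_lt_or_eq.mp hmn with hlt | rfl
      · refine Set.Subset.trans ?_ (ih hlt)
        rw [hf n]
        exact (hsub (f n)).trans Set.diff_subset
      · rw [hf m]
        exact hsub (f m)
  refine hray ⟨fun n => (f n).r, ?_, ?_⟩
  · intro m n hmn
    by_contra hne
    have key : ∀ m n : ℕ, m < n → (f n).r ≠ (f m).r := by
      intro m n hmn'
      have := hmono m n hmn' (f n).hr
      simpa using this.2
    rcases lt_or_gt_of_ne hne with hlt | hlt
    · exact key m n hlt hmn.symm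
    · exact key n m hlt hmn
  · intro n
    show G.Adj (f n).r (f (n + 1)).r
    rw [hf n]
    exact hadj (f n)

end BondAux
/-- A finitely separable rayless graph has no infinite bond. -/
theorem bond_finite_of_finitelySeparable_rayless {V : Type*}
    (G : SimpleGraph V) (hG : G.FinitelySeparable) (hray : G.Rayless) :
    ∀ B : Set (Sym2 V), G.IsBond B → B.Finite := by
  classical
  intro B hB
  by_contra hBfin
  have hBinf : B.Infinite := hBfin
  obtain ⟨X, hBX⟩ := hB.1
  obtain ⟨C, hCX, hCconn, hCend⟩ := BondAux.bond_side hB hBX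
  have hBXc : B = G.cutEdgeSet Xᶜ := by rw [BondAux.cutEdgeSet_compl]; exact hBX
  obtain ⟨D, hDXc, hDconn, hDend⟩ := BondAux.bond_side hB hBXc
  set emb := Set.Infinite.natEmbedding B hBinf with hembdef
  have hrep : ∀ n : ℕ, ∃ p q, G.Adj p q ∧ (emb n : Sym2 V) = s(p, q) ∧
      p ∈ C ∧ q ∈ D := by
    intro n
    obtain ⟨p, q, hadj, heq, hpC, hq⟩ := hCend _ (emb n).2
    obtain ⟨p', q', hadj', heq', hpD, hq'⟩ := hDend _ (emb n).2
    have hpq : s(p, q) = s(p', q') := heq.symm.trans heq'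
    rw [Sym2.eq_iff] at hpq
    rcases hpq with ⟨rfl, rfl⟩ | ⟨rfl, rfl⟩
    · exact absurd (hCX hpC) (hDXc hpD)
    · exact ⟨p, q, hadj, heq, hpC, hpD⟩
  choose aa bb hadj hrepeq haaC hbbD using hrep
  obtain ⟨z₁, hz₁, g₁, hg₁, P, hPsupp, hPdisj⟩ :=
    BondAux.core hray hCconn aa haaC
  obtain ⟨z₂, hz₂, g₂, hg₂, Q, hQsupp, hQdisj⟩ :=
    BondAux.core hray hDconn (fun n => bb (g₁ n)) (fun n => hbbD _)
  set k : ℕ → ℕ := fun n => g₁ (g₂ n) with hkdef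
  set W : (n : ℕ) → G.Walk z₁ z₂ := fun n =>
    (P (g₂ n)).append (SimpleGraph.Walk.cons (hadj (k n)) (Q n).reverse)
    with hWdef
  have hWedges : ∀ n e, e ∈ (W n).edges ↔
      e ∈ (P (g₂ n)).edges ∨ e = s(aa (k n), bb (k n)) ∨ e ∈ (Q n).edges := by
    intro n e
    rw [hWdef]
    simp [SimpleGraph.Walk.edges_append, SimpleGraph.Walk.edges_cons,
      SimpleGraph.Walk.edges_reverse, List.mem_append, List.mem_cons,
      List.mem_reverse]
    exact Iff.rfl
  have hPC : ∀ n e, e ∈ (P n).edges → ∀ w ∈ e, w ∈ C :=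
    fun n e he => BondAux.edge_ends_mem (hPsupp n) he
  have hQD : ∀ n e, e ∈ (Q n).edges → ∀ w ∈ e, w ∈ D :=
    fun n e he => BondAux.edge_ends_mem (hQsupp n) he
  have hCD : ∀ x, x ∈ C → x ∈ D → False := fun x hx hy => (hDXc hy) (hCX hx)
  have hmid : ∀ m n, s(aa (k m), bb (k m)) = s(aa (k n), bb (k n)) → m = n := by
    intro m n h
    have hval : (emb (k m) : Sym2 V) = emb (k n) := by
      rw [hrepeq, hrepeq, h]
    exact hg₂ (hg₁ (emb.injective (Subtype.ext hval)))
  have hWdisj : ∀ m n, m ≠ n → ∀ e ∈ (W m).edges, e ∉ (W n).edges := by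
    intro m n hmn e hem hen
    rw [hWedges] at hem hen
    have hbbmem : ∀ j, bb (k j) ∈ s(aa (k j), bb (k j)) := by
      intro j; simp
    have haamem : ∀ j, aa (k j) ∈ s(aa (k j), bb (k j)) := by
      intro j; simp
    obtain ⟨w, hw⟩ : ∃ w, w ∈ e := ⟨e.out.1, Sym2.out_fst_mem e⟩
    rcases hem with h1 | h1 | h1 <;> rcases hen with h2 | h2 | h2
    · exact hPdisj (g₂ m) (g₂ n) (fun h => hmn (hg₂ h)) e h1 h2
    · exact hCD _ (hPC _ _ h1 _ (h2 ▸ hbbmem n)) (hbbD _)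
    · exact hCD _ (hPC _ _ h1 w hw) (hQD _ _ h2 w hw)
    · exact hCD _ (hPC _ _ h2 _ (h1 ▸ hbbmem m)) (hbbD _)
    · exact hmn (hmid m n (h1.symm.trans h2))
    · exact hCD _ (haaC _) (hQD _ _ h2 _ (h1 ▸ haamem m))
    · exact hCD _ (hPC _ _ h2 w hw) (hQD _ _ h1 w hw)
    · exact hCD _ (haaC _) (hQD _ _ h1 _ (h2 ▸ haamem n))
    · exact hQdisj m n hmn e h1 h2
  have hz12 : z₁ ≠ z₂ := fun h => (hDXc hz₂) (hCX (h ▸ hz₁))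
  obtain ⟨Z, hz₁Z, hz₂Z, hZfin⟩ := hG z₁ z₂ hz12
  choose d hd hdfst hdsnd using fun n =>
    (W n).exists_boundary_dart Z hz₁Z hz₂Z
  have hmemcut : ∀ n, (d n).edge ∈ G.cutEdgeSet Z := fun n =>
    ⟨(d n).fst, (d n).snd, (d n).adj, rfl, hdfst n, hdsnd n⟩
  have hedge : ∀ n, (d n).edge ∈ (W n).edges := fun n =>
    List.mem_map_of_mem (hd n)
  have hinj : Function.Injective (fun n => (d n).edge) := by
    intro m n h
    have h' : (d m).edge = (d n).edge := h
    by_contra hne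
    exact hWdisj m n hne _ (hedge m) (h' ▸ hedge n)
  exact (Set.infinite_of_injective_forall_mem hinj hmemcut) hZfin
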